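/- For all reals x ≥ 0, y ≥ 0, all reals κ₁₂ ≥ 0, κ₁₃ ≥ 0, κ₂₁ ≥ 0, κ₂₃ ≥ 0, and every m ∈ ℕ, the double sequence (n₁, n₂) ↦ x^{n₁} · y^{n₂} / (Γ(1 + κ₁₂·n₂ + κ₁₃·m + n₁) · Γ(1 + κ₂₁·n₁ + κ₂₃·m + n₂)) is summable over ℕ × ℕ. (This is the everywhere-convergence of the normalization series of the (γ₁, γ₂)-doubly-deformed vector coherent states.) -/

import Mathlib

open Nat

/-- For `s ≥ 1`, `Γ s ≥ 1/2`. -/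
lemma half_le_Gamma {s : ℝ} (hs : 1 ≤ s) : (1/2 : ℝ) ≤ Real.Gamma s := by
  have mono := Real.Gamma_strictMonoOn_Ici.monotoneOn
  rcases le_or_gt 2 s with h | h
  · have : Real.Gamma 2 ≤ Real.Gamma s := mono (by norm_num) h h
    rw [Real.Gamma_two] at this; linarith
  · have hs0 : s ≠ 0 := by positivity
    have h1 : Real.Gamma (s + 1) = s * Real.Gamma s := Real.Gamma_add_one hs0
    have h2 : Real.Gamma 2 ≤ Real.Gamma (s + 1) := mono (by norm_num) (by simp; linarith) (by linarith)
    rw [Real.Gamma_two] at h2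
    have hGpos : 0 < Real.Gamma s := Real.Gamma_pos_of_pos (by linarith)
    nlinarith

/-- For `a ≥ 0`, `Γ(1 + a + n) ≥ n! / 2`. -/
lemma factorial_div_two_le_Gamma {a : ℝ} (ha : 0 ≤ a) (n : ℕ) :
    (n ! : ℝ) / 2 ≤ Real.Gamma (1 + a + n) := by
  have key : ∀ k : ℕ, (k ! : ℝ) * Real.Gamma (1 + a) ≤ Real.Gamma (1 + a + k) := by
    intro k
    induction k with
    | zero => simp
    | succ k ih =>
      have hpos : (0:ℝ) < 1 + a + k := by positivity
      have h1 : Real.Gamma (1 + a + ((k:ℝ)+1)) = (1 + a + k) * Real.Gamma (1 + a + k) := by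
        have := Real.Gamma_add_one (s := 1 + a + k) (ne_of_gt hpos)
        rw [← this]; ring_nf
      have hk1 : ((k:ℝ) + 1) ≤ 1 + a + k := by linarith
      have hG : 0 ≤ Real.Gamma (1 + a + k) := le_of_lt (Real.Gamma_pos_of_pos hpos)
      have hfk : (0:ℝ) ≤ (k ! : ℝ) * Real.Gamma (1 + a) := by
        have := Real.Gamma_pos_of_pos (show (0:ℝ) < 1 + a by linarith)
        positivity
      calc ((k+1)! : ℝ) * Real.Gamma (1 + a) = ((k:ℝ)+1) * ((k ! : ℝ) * Real.Gamma (1 + a)) := by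
            push_cast [Nat.factorial_succ]; ring
        _ ≤ (1 + a + k) * Real.Gamma (1 + a + k) := by
            apply mul_le_mul hk1 ih hfk (by linarith)
        _ = Real.Gamma (1 + a + ((k:ℝ)+1)) := h1.symm
        _ = Real.Gamma (1 + a + ((k+1 : ℕ):ℝ)) := by push_cast; ring_nf
  have h1 : (1/2 : ℝ) ≤ Real.Gamma (1 + a) := half_le_Gamma (by linarith)
  calc (n ! : ℝ) / 2 = (n ! : ℝ) * (1/2) := by ring
    _ ≤ (n ! : ℝ) * Real.Gamma (1 + a) := by
        apply mul_le_mul_of_nonneg_left h1 (by positivity)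
    _ ≤ Real.Gamma (1 + a + n) := key n

/-- Everywhere-convergence of the normalization series of the `(γ₁, γ₂)`-doubly-deformed
vector coherent states. -/
theorem norm_series_summable_gamma1_gamma2 (x y κ₁₂ κ₁₃ κ₂₁ κ₂₃ : ℝ)
    (hx : 0 ≤ x) (hy : 0 ≤ y)
    (h12 : 0 ≤ κ₁₂) (h13 : 0 ≤ κ₁₃) (h21 : 0 ≤ κ₂₁) (h23 : 0 ≤ κ₂₃) (m : ℕ) :
    Summable fun p : ℕ × ℕ =>
      x ^ p.1 * y ^ p.2 /
        (Real.Gamma (1 + κ₁₂ * p.2 + κ₁₃ * m + p.1) *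
          Real.Gamma (1 + κ₂₁ * p.1 + κ₂₃ * m + p.2)) := by
  have hsum : Summable fun p : ℕ × ℕ =>
      (2 * (x ^ p.1 / (p.1)!)) * (2 * (y ^ p.2 / (p.2)!)) := by
    apply Summable.mul_of_nonneg
      ((Real.summable_pow_div_factorial x).mul_left 2)
      ((Real.summable_pow_div_factorial y).mul_left 2)
    · intro n; positivity
    · intro n; positivity
  apply Summable.of_nonneg_of_le _ _ hsum
  · intro p
    have h1 : (0:ℝ) < 1 + κ₁₂ * p.2 + κ₁₃ * m + p.1 := by positivity
    have h2 : (0:ℝ) < 1 + κ₂₁ * p.1 + κ₂₃ * m + p.2 := by positivity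
    have := Real.Gamma_pos_of_pos h1
    have := Real.Gamma_pos_of_pos h2
    positivity
  · intro p
    have ha1 : (0:ℝ) ≤ κ₁₂ * p.2 + κ₁₃ * m := by positivity
    have ha2 : (0:ℝ) ≤ κ₂₁ * p.1 + κ₂₃ * m := by positivity
    have hb1 : ((p.1)! : ℝ) / 2 ≤ Real.Gamma (1 + κ₁₂ * p.2 + κ₁₃ * m + p.1) := by
      have := factorial_div_two_le_Gamma ha1 p.1
      convert this using 3; ring
    have hb2 : ((p.2)! : ℝ) / 2 ≤ Real.Gamma (1 + κ₂₁ * p.1 + κ₂₃ * m + p.2) := by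
      have := factorial_div_two_le_Gamma ha2 p.2
      convert this using 3; ring
    have hf1 : (0:ℝ) < ((p.1)! : ℝ) / 2 := by positivity
    have hf2 : (0:ℝ) < ((p.2)! : ℝ) / 2 := by positivity
    have hden : ((p.1)! : ℝ) / 2 * (((p.2)! : ℝ) / 2) ≤
        Real.Gamma (1 + κ₁₂ * p.2 + κ₁₃ * m + p.1) *
          Real.Gamma (1 + κ₂₁ * p.1 + κ₂₃ * m + p.2) :=
      mul_le_mul hb1 hb2 (le_of_lt hf2) (le_trans (le_of_lt hf1) hb1)
    have hnum : (0:ℝ) ≤ x ^ p.1 * y ^ p.2 := by positivity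
    calc x ^ p.1 * y ^ p.2 /
          (Real.Gamma (1 + κ₁₂ * p.2 + κ₁₃ * m + p.1) *
            Real.Gamma (1 + κ₂₁ * p.1 + κ₂₃ * m + p.2))
        ≤ x ^ p.1 * y ^ p.2 / (((p.1)! : ℝ) / 2 * (((p.2)! : ℝ) / 2)) := by
          gcongr
      _ = (2 * (x ^ p.1 / (p.1)!)) * (2 * (y ^ p.2 / (p.2)!)) := by
          field_simp
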